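/- Let μ be a non-atomic Borel probability measure on [0,1]. Given q < 0 and 0 < a ≤ b, there exist a constant c₂ > 0 and r₀ > 0 such that for all 0 < r ≤ r₀: Σ_{B ∈ B_r^*} μ(B̄^b)^q ≤ Σ_{B ∈ B_r^*} μ(B̄^a)^q ≤ c₂ · Σ_{B ∈ B_{ra/(2+b)}^*} μ(B̄^b)^q. -/

import Mathlib

open MeasureTheory Filter Set
open scoped Classical

noncomputable section

/-- The enlargement `B̄^a` of the interval `[s,t]` by the factor `1+a` about its centre. -/
def enlarge (a s t : ℝ) : Set ℝ :=
  Set.Icc (s - a * (t - s) / 2) (t + a * (t - s) / 2)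

/-- The moment sum `Σ_{B ∈ B_r^*} μ(B̄^a)^q` over grid intervals of length `r`
whose interior meets the support of `μ` (i.e. with `μ(B) > 0`). -/
def gridSum (μ : Measure ℝ) (a q R : ℝ) : ℝ :=
  ∑' m : ℤ, if 0 < μ (Set.Icc ((m : ℝ) * R) (((m : ℝ) + 1) * R))
    then (μ (enlarge a ((m : ℝ) * R) (((m : ℝ) + 1) * R))).toReal ^ q else 0

/-- The coarse multifractal moment function
`β_a(q) = inf{β : limsup_{r→0⁺} r^β Σ_{B ∈ B_r^*} μ(B̄^a)^q = 0}`.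
(For the nonnegative quantity `r^β · Σ…`, vanishing of the `limsup` as `r → 0⁺`
is the same as convergence to `0`.) -/
def betaA (μ : Measure ℝ) (a q : ℝ) : ℝ :=
  sInf {β : ℝ | Filter.Tendsto (fun R => R ^ β * gridSum μ a q R)
    (nhdsWithin 0 (Set.Ioi 0)) (nhds 0)}

/-- `F` is a "fractal subset" of `[0,1]`: compact, Lebesgue-null, containing `0` and `1`. -/
def IsFractalSubset (F : Set ℝ) : Prop :=
  IsCompact F ∧ F ⊆ Set.Icc 0 1 ∧ (0 : ℝ) ∈ F ∧ (1 : ℝ) ∈ F ∧ MeasureTheory.volume F = 0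

/-- The complementary intervals `I_n = (l n, r n)` of `F` in `[0,1]`, enumerated with
nonincreasing lengths. -/
structure FractalComplement (F : Set ℝ) where
  l : ℕ → ℝ
  r : ℕ → ℝ
  lt : ∀ n, l n < r n
  disj : Pairwise fun n m => Disjoint (Set.Ioo (l n) (r n)) (Set.Ioo (l m) (r m))
  union : (⋃ n, Set.Ioo (l n) (r n)) = Set.Icc (0 : ℝ) 1 \ F
  mono : ∀ n, r (n + 1) - l (n + 1) ≤ r n - l n

/-- The length `|I_n|` of the `n`-th complementary interval. -/
def FractalComplement.len {F : Set ℝ} (c : FractalComplement F) (n : ℕ) : ℝ := c.r n - c.l n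

/-- The enlargement `Ī_n^a` of the closure of the complementary interval `I_n`. -/
def FractalComplement.I {F : Set ℝ} (c : FractalComplement F) (a : ℝ) (n : ℕ) : Set ℝ :=
  enlarge a (c.l n) (c.r n)

/-- The lacunarity condition with constant `lam`: every interval `[x-r, x+r]` with `x ∈ F`
and `0 < r ≤ 1` contains a complementary interval of length at least `lam * r`. -/
def Lacunary {F : Set ℝ} (c : FractalComplement F) (lam : ℝ) : Prop :=
  ∀ x ∈ F, ∀ R : ℝ, 0 < R → R ≤ 1 → ∃ n,
    Set.Ioo (c.l n) (c.r n) ⊆ Set.Icc (x - R) (x + R) ∧ lam * R ≤ c.len n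

/-- The topological support of `μ` is exactly `F`. -/
def HasSupport (μ : Measure ℝ) (F : Set ℝ) : Prop :=
  μ Fᶜ = 0 ∧ ∀ x ∈ F, ∀ ε : ℝ, 0 < ε → 0 < μ (Set.Ioo (x - ε) (x + ε))

/-- for `q < 0` and `0 < a ≤ b` the enlarged grid moment sums for
parameters `a` and `b` are comparable, after rescaling the grid by `a/(2+b)`. -/
lemma grid_zero (μ : Measure ℝ) (hsupp : μ (Set.Icc (0:ℝ) 1)ᶜ = 0)
    {R : ℝ} (hR : 0 < R) {m : ℤ} (hm : m ∉ Finset.Icc (-1 : ℤ) ⌈1/R⌉) :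
    μ (Set.Icc ((m:ℝ)*R) (((m:ℝ)+1)*R)) = 0 := by
  rw [Finset.mem_Icc, not_and_or, not_le, not_le] at hm
  refine measure_mono_null ?_ hsupp
  intro x hx
  simp only [Set.mem_compl_iff, Set.mem_Icc, not_and_or, not_le]
  rcases hm with hm | hm
  · left
    have h1 : (m:ℝ) + 1 ≤ -1 := by exact_mod_cast (by omega : m + 1 ≤ (-1:ℤ))
    have h2 : ((m:ℝ)+1)*R ≤ -R := by nlinarith
    have := hx.2
    linarith
  · right
    have h1 : (1/R : ℝ) + 1 ≤ (m:ℝ) := by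
      have h2 : (⌈1/R⌉ : ℝ) + 1 ≤ (m:ℝ) := by exact_mod_cast (by omega : ⌈1/R⌉ + 1 ≤ m)
      have := Int.le_ceil (1/R)
      linarith
    have h4 : 1 + R ≤ (m:ℝ)*R := by
      have h3 : (1/R) * R = 1 := by field_simp
      nlinarith
    have := hx.1
    linarith

lemma enlarge_subset_enlarge {a b s t : ℝ} (hab : a ≤ b) (hst : s ≤ t) :
    enlarge a s t ⊆ enlarge b s t :=
  Set.Icc_subset_Icc (by nlinarith) (by nlinarith)

lemma subset_enlarge {a s t : ℝ} (ha : 0 ≤ a) (hst : s ≤ t) :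
    Set.Icc s t ⊆ enlarge a s t :=
  Set.Icc_subset_Icc (by nlinarith) (by nlinarith)

theorem stmt_4 (μ : Measure ℝ) [IsProbabilityMeasure μ] [NullSingletonClass μ]
    (hsupp : μ (Set.Icc (0 : ℝ) 1)ᶜ = 0)
    (q a b : ℝ) (hq : q < 0) (ha : 0 < a) (hab : a ≤ b) :
    ∃ c₂ r₀ : ℝ, 0 < c₂ ∧ 0 < r₀ ∧ ∀ R : ℝ, 0 < R → R ≤ r₀ →
      gridSum μ b q R ≤ gridSum μ a q R ∧
      gridSum μ a q R ≤ c₂ * gridSum μ b q (R * a / (2 + b)) := by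
  have hb : 0 < b := lt_of_lt_of_le ha hab
  have h2b : (0:ℝ) < 2 + b := by linarith
  refine ⟨3, 1, by norm_num, one_pos, fun R hR _ => ?_⟩
  set term : ℝ → ℝ → ℤ → ℝ := fun p c m =>
    if 0 < μ (Set.Icc ((m : ℝ) * c) (((m : ℝ) + 1) * c))
      then (μ (enlarge p ((m : ℝ) * c) (((m : ℝ) + 1) * c))).toReal ^ q else 0 with hterm
  have hgs : ∀ p c, gridSum μ p q c = ∑' m : ℤ, term p c m := fun _ _ => rfl
  have hnonneg : ∀ p c m, 0 ≤ term p c m := by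
    intro p c m
    simp only [hterm]
    split
    · exact Real.rpow_nonneg ENNReal.toReal_nonneg q
    · exact le_rfl
  -- zero off finset
  have hzero : ∀ (p c : ℝ), 0 < c → ∀ m ∉ Finset.Icc (-1 : ℤ) ⌈1/c⌉, term p c m = 0 := by
    intro p c hc m hm
    simp only [hterm]
    rw [if_neg]
    rw [grid_zero μ hsupp hc hm]
    exact lt_irrefl 0
  have hsummable : ∀ (p c : ℝ), 0 < c → Summable (term p c) := by
    intro p c hc
    exact summable_of_ne_finset_zero (hzero p c hc)
  -- basic positivity facts
  have htop : ∀ s : Set ℝ, μ s ≠ ⊤ := fun s => measure_ne_top μ s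
  have hposA : ∀ (p c : ℝ) (m : ℤ), 0 ≤ p → 0 < c →
      0 < μ (Set.Icc ((m:ℝ)*c) (((m:ℝ)+1)*c)) →
      0 < (μ (enlarge p ((m:ℝ)*c) (((m:ℝ)+1)*c))).toReal := by
    intro p c m hp hc hpos
    have hmc : (m:ℝ)*c ≤ ((m:ℝ)+1)*c := by nlinarith
    have : 0 < μ (enlarge p ((m:ℝ)*c) (((m:ℝ)+1)*c)) :=
      lt_of_lt_of_le hpos (measure_mono (subset_enlarge hp hmc))
    exact ENNReal.toReal_pos this.ne' (htop _)
  -- FIRST INEQUALITY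
  have first : gridSum μ b q R ≤ gridSum μ a q R := by
    rw [hgs, hgs]
    refine Summable.tsum_le_tsum ?_ (hsummable b R hR) (hsummable a R hR)
    intro m
    simp only [hterm]
    split
    · rename_i hpos
      have hmc : (m:ℝ)*R ≤ ((m:ℝ)+1)*R := by nlinarith
      refine Real.rpow_le_rpow_of_nonpos (hposA a R m ha.le hR hpos) ?_ hq.le
      exact ENNReal.toReal_mono (htop _) (measure_mono (enlarge_subset_enlarge hab hmc))
    · exact le_rfl
  refine ⟨first, ?_⟩
  -- SECOND INEQUALITY
  set r' : ℝ := R * a / (2 + b) with hr'def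
  have hr' : 0 < r' := by positivity
  have hkey : r' * (2 + b) = R * a := by
    rw [hr'def]; field_simp
  have hr'R : r' ≤ R := by
    rw [hr'def, div_le_iff₀ h2b]; nlinarith
  -- cover of ℝ by small grid intervals
  have hcover : ∀ x : ℝ, ∃ k : ℤ, x ∈ Set.Icc ((k:ℝ)*r') (((k:ℝ)+1)*r') := by
    intro x
    refine ⟨⌊x/r'⌋, ?_, ?_⟩
    · calc (⌊x/r'⌋:ℝ) * r' ≤ (x/r') * r' :=
            mul_le_mul_of_nonneg_right (Int.floor_le _) hr'.le
      _ = x := by field_simp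
    · calc x = (x/r') * r' := by field_simp
      _ ≤ ((⌊x/r'⌋:ℝ)+1) * r' :=
            mul_le_mul_of_nonneg_right (Int.lt_floor_add_one (x/r')).le hr'.le
  -- existence of a chosen small interval
  have hchoice : ∀ m : ℤ, 0 < μ (Set.Icc ((m:ℝ)*R) (((m:ℝ)+1)*R)) →
      ∃ k : ℤ, 0 < μ (Set.Icc ((k:ℝ)*r') (((k:ℝ)+1)*r') ∩
        Set.Icc ((m:ℝ)*R) (((m:ℝ)+1)*R)) := by
    intro m hm
    by_contra hcon
    push_neg at hcon
    have hall : ∀ k : ℤ, μ (Set.Icc ((k:ℝ)*r') (((k:ℝ)+1)*r') ∩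
        Set.Icc ((m:ℝ)*R) (((m:ℝ)+1)*R)) = 0 := fun k =>
      le_antisymm (not_lt.mp (by simpa using (hcon k).not_gt)) (zero_le ..)
    have hsub : Set.Icc ((m:ℝ)*R) (((m:ℝ)+1)*R) ⊆
        ⋃ k : ℤ, (Set.Icc ((k:ℝ)*r') (((k:ℝ)+1)*r') ∩ Set.Icc ((m:ℝ)*R) (((m:ℝ)+1)*R)) := by
      intro x hx
      obtain ⟨k, hk⟩ := hcover x
      exact Set.mem_iUnion.mpr ⟨k, hk, hx⟩
    have := measure_mono_null hsub (measure_iUnion_null hall)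
    exact hm.ne' this
  set K : ℤ → ℤ := fun m =>
    if h : 0 < μ (Set.Icc ((m:ℝ)*R) (((m:ℝ)+1)*R)) then (hchoice m h).choose else 0 with hK
  -- finsets
  set sR : Finset ℤ := Finset.Icc (-1 : ℤ) ⌈1/R⌉ with hsR
  set sr : Finset ℤ := Finset.Icc (-1 : ℤ) ⌈1/r'⌉ with hsr
  set s' : Finset ℤ := sR.filter (fun m => 0 < μ (Set.Icc ((m:ℝ)*R) (((m:ℝ)+1)*R))) with hs'
  -- key geometric bound for chosen intervals
  have hchosen : ∀ m ∈ s', 0 < μ (Set.Icc (((K m):ℝ)*r') ((((K m):ℝ)+1)*r') ∩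
      Set.Icc ((m:ℝ)*R) (((m:ℝ)+1)*R)) := by
    intro m hm
    have hpos := (Finset.mem_filter.mp hm).2
    simp only [hK, dif_pos hpos]
    exact (hchoice m hpos).choose_spec
  have hsubset : ∀ m ∈ s',
      enlarge b (((K m):ℝ)*r') ((((K m):ℝ)+1)*r') ⊆
      enlarge a ((m:ℝ)*R) (((m:ℝ)+1)*R) := by
    intro m hm
    obtain ⟨x, hx1, hx2⟩ := nonempty_of_measure_ne_zero (hchosen m hm).ne'
    simp only [Set.mem_Icc] at hx1 hx2
    unfold enlarge
    apply Set.Icc_subset_Icc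
    · nlinarith [hx1.1, hx1.2, hx2.1, hx2.2]
    · nlinarith [hx1.1, hx1.2, hx2.1, hx2.2]
  -- pointwise bound
  have hpoint : ∀ m ∈ s', term a R m ≤ term b r' (K m) := by
    intro m hm
    have hpos := (Finset.mem_filter.mp hm).2
    have hsmallpos : 0 < μ (Set.Icc (((K m):ℝ)*r') ((((K m):ℝ)+1)*r')) :=
      lt_of_lt_of_le (hchosen m hm) (measure_mono (Set.inter_subset_left))
    simp only [hterm, if_pos hpos, if_pos hsmallpos]
    refine Real.rpow_le_rpow_of_nonpos (hposA b r' (K m) hb.le hr' hsmallpos) ?_ hq.le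
    exact ENNReal.toReal_mono (htop _) (measure_mono (hsubset m hm))
  -- fiber cardinality bound
  have hfiber : ∀ k' : ℤ, (s'.filter (fun m => K m = k')).card ≤ 3 := by
    intro k'
    have hsub2 : s'.filter (fun m => K m = k') ⊆
        Finset.Icc (⌈(k':ℝ)*r'/R⌉ - 1) (⌈(k':ℝ)*r'/R⌉ + 1) := by
      intro m hm
      obtain ⟨hm', hKm⟩ := Finset.mem_filter.mp hm
      obtain ⟨x, hx1, hx2⟩ := nonempty_of_measure_ne_zero (hchosen m hm').ne'
      rw [hKm] at hx1
      simp only [Set.mem_Icc] at hx1 hx2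
      rw [Finset.mem_Icc]
      constructor
      · have h1 : (k':ℝ)*r'/R ≤ (m:ℝ) + 1 := by
          rw [div_le_iff₀ hR]
          nlinarith [hx1.1, hx2.2]
        have h1' := Int.ceil_le.mpr (show (k':ℝ)*r'/R ≤ ((m+1 : ℤ):ℝ) by push_cast; linarith)
        omega
      · have hc1 : (k':ℝ)*r'/R ≤ (⌈(k':ℝ)*r'/R⌉:ℝ) := Int.le_ceil _
        have hc2 : (k':ℝ)*r' ≤ (⌈(k':ℝ)*r'/R⌉:ℝ) * R := by
          rw [div_le_iff₀ hR] at hc1; linarith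
        have h3 : (m:ℝ) * R ≤ ((⌈(k':ℝ)*r'/R⌉:ℝ) + 1) * R := by
          nlinarith [hx1.2, hx2.1]
        have h4 : (m:ℝ) ≤ (⌈(k':ℝ)*r'/R⌉:ℝ) + 1 := le_of_mul_le_mul_right h3 hR
        exact_mod_cast h4
    calc (s'.filter (fun m => K m = k')).card ≤ _ := Finset.card_le_card hsub2
    _ ≤ 3 := by
        rw [Int.card_Icc]
        omega
  -- image contained in small support finset
  have himage : s'.image K ⊆ sr := by
    intro k' hk'
    obtain ⟨m, hm, hKm⟩ := Finset.mem_image.mp hk'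
    by_contra hcon
    have hsmallpos : 0 < μ (Set.Icc (((K m):ℝ)*r') ((((K m):ℝ)+1)*r')) :=
      lt_of_lt_of_le (hchosen m hm) (measure_mono (Set.inter_subset_left))
    rw [hKm] at hsmallpos
    exact hsmallpos.ne' (grid_zero μ hsupp hr' hcon)
  -- assemble
  have e1 : gridSum μ a q R = ∑ m ∈ s', term a R m := by
    rw [hgs, tsum_eq_sum (hzero a R hR)]
    refine (Finset.sum_subset (Finset.filter_subset _ _) ?_).symm
    intro m hm hm'
    simp only [hterm]
    rw [if_neg]
    intro hpos
    exact hm' (Finset.mem_filter.mpr ⟨hm, hpos⟩)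
  have e2 : gridSum μ b q r' = ∑ k' ∈ sr, term b r' k' := tsum_eq_sum (hzero b r' hr')
  rw [e1]
  have step1 : ∑ m ∈ s', term a R m ≤ ∑ m ∈ s', term b r' (K m) :=
    Finset.sum_le_sum hpoint
  have step2 : ∑ m ∈ s', term b r' (K m)
      = ∑ k' ∈ s'.image K, (s'.filter (fun m => K m = k')).card • term b r' k' :=
    Finset.sum_comp (term b r') K
  have step3 : ∑ k' ∈ s'.image K, (s'.filter (fun m => K m = k')).card • term b r' k'
      ≤ ∑ k' ∈ s'.image K, 3 * term b r' k' := by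
    refine Finset.sum_le_sum fun k' _ => ?_
    rw [nsmul_eq_mul]
    have h3 : ((s'.filter (fun m => K m = k')).card : ℝ) ≤ 3 := by
      exact_mod_cast hfiber k'
    exact mul_le_mul_of_nonneg_right h3 (hnonneg b r' k')
  have step4 : ∑ k' ∈ s'.image K, 3 * term b r' k' ≤ 3 * ∑ k' ∈ sr, term b r' k' := by
    rw [← Finset.mul_sum]
    refine mul_le_mul_of_nonneg_left ?_ (by norm_num)
    exact Finset.sum_le_sum_of_subset_of_nonneg himage (fun k' _ _ => hnonneg b r' k')
  rw [e2]
  calc ∑ m ∈ s', term a R m ≤ _ := step1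
  _ = _ := step2
  _ ≤ _ := step3
  _ ≤ _ := step4
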